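/- For every δ ∈ (0, 1/2) there exist a probability space (Ω, F, P), an event A ∈ F, and sub-σ-fields G and H of F such that, with X = E[1_A | G] and Y = E[1_A | H], one has P(|X − Y| ≥ 1 − δ) = 2δ/(1 + δ); moreover this example satisfies |X − Y| = (1 − δ)·1_A almost surely. -/

import Mathlib

open MeasureTheory ENNReal

open Classical in
lemma setIntegral_three (a b : ℝ≥0∞) (ha : a ≠ ⊤) (hb : b ≠ ⊤) (f : Fin 3 → ℝ) (s : Set (Fin 3)) :
    ∫ x in s, f x ∂((a • Measure.dirac 0) + (b • Measure.dirac 1) + (a • Measure.dirac 2)) =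
      a.toReal * (if (0 : Fin 3) ∈ s then f 0 else 0)
      + b.toReal * (if (1 : Fin 3) ∈ s then f 1 else 0)
      + a.toReal * (if (2 : Fin 3) ∈ s then f 2 else 0) := by
  have hfin : ∀ (c : ℝ≥0∞), c ≠ ⊤ → ∀ (x : Fin 3),
      IsFiniteMeasure (c • (Measure.dirac x).restrict s) := by
    intro c hc x
    constructor
    rw [Measure.smul_apply, Measure.restrict_apply_univ, smul_eq_mul]
    calc c * Measure.dirac x s ≤ c * 1 := by gcongr; exact prob_le_one
      _ = c := mul_one c
      _ < ⊤ := hc.lt_top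
  haveI h0 := hfin a ha 0
  haveI h1 := hfin b hb 1
  haveI h2 := hfin a ha 2
  haveI h01 : IsFiniteMeasure (a • (Measure.dirac (0:Fin 3)).restrict s + b • (Measure.dirac (1:Fin 3)).restrict s) := ⟨by rw [Measure.add_apply]; exact ENNReal.add_lt_top.mpr ⟨measure_lt_top _ _, measure_lt_top _ _⟩⟩
  rw [Measure.restrict_add, Measure.restrict_add, Measure.restrict_smul, Measure.restrict_smul,
    Measure.restrict_smul, integral_add_measure, integral_add_measure,
    integral_smul_measure, integral_smul_measure, integral_smul_measure,
    setIntegral_dirac f 0 s, setIntegral_dirac f 1 s, setIntegral_dirac f 2 s]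
  · simp [smul_eq_mul]
  · exact Integrable.of_finite
  · exact Integrable.of_finite
  · exact Integrable.of_finite
  · exact Integrable.of_finite

lemma measure_three (a b : ℝ≥0∞) (s : Set (Fin 3)) :
    (((a • Measure.dirac 0) + (b • Measure.dirac 1) + (a • Measure.dirac 2) : Measure (Fin 3))) s =
      a * s.indicator 1 0 + b * s.indicator 1 1 + a * s.indicator 1 2 := by
  simp [Measure.add_apply, Measure.smul_apply, Measure.dirac_apply, smul_eq_mul]


lemma mem_gen_aux (x y z : Fin 3) (hxz : x ≠ z) (hyz : y ≠ z)
    (s : Set (Fin 3)) (hs : MeasurableSet[MeasurableSpace.generateFrom {({z} : Set (Fin 3))}] s) :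
    x ∈ s ↔ y ∈ s := by
  induction s, hs using MeasurableSpace.generateFrom_induction with
  | hC t ht _ =>
    rw [Set.mem_singleton_iff] at ht; subst ht
    simp only [Set.mem_singleton_iff]
    exact iff_of_false hxz hyz
  | empty => simp
  | compl t ht h => simpa using not_congr h
  | iUnion u hu h => simp only [Set.mem_iUnion]; exact exists_congr h

theorem contradictory_predictions_sharp_lower_bound
    {δ : ℝ} (hδ0 : 0 < δ) (hδ1 : δ < 1 / 2) :
    ∃ (Ω : Type) (F : MeasurableSpace Ω) (P : Measure Ω) (_ : IsProbabilityMeasure P)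
      (A : Set Ω) (_ : MeasurableSet A)
      (G H : MeasurableSpace Ω) (_ : G ≤ F) (_ : H ≤ F),
      P {ω | 1 - δ ≤ |(P[A.indicator (fun _ => (1 : ℝ)) | G]) ω
          - (P[A.indicator (fun _ => (1 : ℝ)) | H]) ω|}
        = ENNReal.ofReal (2 * δ / (1 + δ)) ∧
      (∀ᵐ ω ∂P, |(P[A.indicator (fun _ => (1 : ℝ)) | G]) ω
          - (P[A.indicator (fun _ => (1 : ℝ)) | H]) ω|
        = (1 - δ) * A.indicator (fun _ => (1 : ℝ)) ω) := by
  classical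
  have h1δ : (0:ℝ) < 1 + δ := by linarith
  set ar : ℝ := δ / (1 + δ) with har_def
  set br : ℝ := (1 - δ) / (1 + δ) with hbr_def
  have har : 0 ≤ ar := div_nonneg hδ0.le h1δ.le
  have hbr : 0 ≤ br := div_nonneg (by linarith) h1δ.le
  set a : ℝ≥0∞ := ENNReal.ofReal ar with ha_def
  set b : ℝ≥0∞ := ENNReal.ofReal br with hb_def
  have haT : a ≠ ⊤ := ENNReal.ofReal_ne_top
  have hbT : b ≠ ⊤ := ENNReal.ofReal_ne_top
  have hat : a.toReal = ar := ENNReal.toReal_ofReal har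
  have hbt : b.toReal = br := ENNReal.toReal_ofReal hbr
  set P : Measure (Fin 3) :=
    (a • Measure.dirac 0) + (b • Measure.dirac 1) + (a • Measure.dirac 2) with hP_def
  -- P is a probability measure
  haveI hPprob : IsProbabilityMeasure P := by
    constructor
    rw [hP_def, measure_three]
    simp only [Set.indicator_of_mem (Set.mem_univ _), Pi.one_apply, mul_one]
    have e1 : a + b + a = ENNReal.ofReal (ar + br + ar) := by
      rw [ENNReal.ofReal_add (by linarith) har, ENNReal.ofReal_add har hbr]
    have e2 : ar + br + ar = 1 := by rw [har_def, hbr_def]; field_simp; ring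
    rw [e1, e2, ENNReal.ofReal_one]
  have hG : MeasurableSpace.generateFrom {({2} : Set (Fin 3))} ≤ Fin.instMeasurableSpace 3 := le_top
  have hH : MeasurableSpace.generateFrom {({0} : Set (Fin 3))} ≤ Fin.instMeasurableSpace 3 := le_top
  haveI : SigmaFinite (P.trim hG) := inferInstance
  haveI : SigmaFinite (P.trim hH) := inferInstance
  set A : Set (Fin 3) := {0, 2} with hA_def
  set f : Fin 3 → ℝ := A.indicator (fun _ => (1:ℝ)) with hf_def
  have hf0 : f 0 = 1 := by
    rw [hf_def]; exact Set.indicator_of_mem (by simp [hA_def]) _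
  have hf1 : f 1 = 0 := by
    rw [hf_def]
    apply Set.indicator_of_notMem
    simp only [hA_def, Set.mem_insert_iff, Set.mem_singleton_iff]
    push_neg
    exact ⟨by decide, by decide⟩
  have hf2 : f 2 = 1 := by
    rw [hf_def]; exact Set.indicator_of_mem (by simp [hA_def]) _
  have hf_int : Integrable f P := Integrable.of_finite
  set g : Fin 3 → ℝ := fun ω => if ω = 2 then (1:ℝ) else δ with hg_def
  set h : Fin 3 → ℝ := fun ω => if ω = 0 then (1:ℝ) else δ with hh_def
  have hg0 : g 0 = δ := by rw [hg_def]; simp only [if_neg (show (0:Fin 3) ≠ 2 by decide)]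
  have hg1 : g 1 = δ := by rw [hg_def]; simp only [if_neg (show (1:Fin 3) ≠ 2 by decide)]
  have hg2 : g 2 = 1 := by rw [hg_def]; simp
  have hh0 : h 0 = 1 := by rw [hh_def]; simp
  have hh1 : h 1 = δ := by rw [hh_def]; simp only [if_neg (show (1:Fin 3) ≠ 0 by decide)]
  have hh2 : h 2 = δ := by rw [hh_def]; simp only [if_neg (show (2:Fin 3) ≠ 0 by decide)]
  -- measurability of g w.r.t. G, h w.r.t. H
  have hg_sm : AEStronglyMeasurable[MeasurableSpace.generateFrom {({2} : Set (Fin 3))}] g P := by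
    apply StronglyMeasurable.aestronglyMeasurable
    apply Measurable.stronglyMeasurable
    apply Measurable.ite _ measurable_const measurable_const
    exact MeasurableSpace.measurableSet_generateFrom rfl
  have hh_sm : AEStronglyMeasurable[MeasurableSpace.generateFrom {({0} : Set (Fin 3))}] h P := by
    apply StronglyMeasurable.aestronglyMeasurable
    apply Measurable.stronglyMeasurable
    apply Measurable.ite _ measurable_const measurable_const
    exact MeasurableSpace.measurableSet_generateFrom rfl
  -- key arithmetic identity
  have hkey : ar * δ + br * δ = ar := by
    rw [har_def, hbr_def]; field_simp; ring
  -- integral equalities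
  have hg_eq : ∀ s : Set (Fin 3), MeasurableSet[MeasurableSpace.generateFrom {({2} : Set (Fin 3))}] s → P s < ⊤ →
      ∫ x in s, g x ∂P = ∫ x in s, f x ∂P := by
    intro s hs _
    rw [hP_def, setIntegral_three a b haT hbT g s, setIntegral_three a b haT hbT f s,
      hat, hbt, hf0, hf1, hf2, hg0, hg1, hg2]
    have h01 : ((1:Fin 3) ∈ s) ↔ ((0:Fin 3) ∈ s) := (mem_gen_aux 0 1 2 (by decide) (by decide) s hs).symm
    by_cases h0 : (0:Fin 3) ∈ s <;> by_cases h2 : (2:Fin 3) ∈ s <;>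
      simp only [h0, h2, h01, if_pos, if_neg, if_true, if_false, iff_true, iff_false,
        mul_zero, mul_one, add_zero, zero_add] <;> linarith [hkey]
  have hh_eq : ∀ s : Set (Fin 3), MeasurableSet[MeasurableSpace.generateFrom {({0} : Set (Fin 3))}] s → P s < ⊤ →
      ∫ x in s, h x ∂P = ∫ x in s, f x ∂P := by
    intro s hs _
    rw [hP_def, setIntegral_three a b haT hbT h s, setIntegral_three a b haT hbT f s,
      hat, hbt, hf0, hf1, hf2, hh0, hh1, hh2]
    have h12 : ((1:Fin 3) ∈ s) ↔ ((2:Fin 3) ∈ s) := mem_gen_aux 1 2 0 (by decide) (by decide) s hs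
    by_cases h0 : (0:Fin 3) ∈ s <;> by_cases h1 : (1:Fin 3) ∈ s <;>
      simp only [h0, h1, ← h12, if_pos, if_neg, if_true, if_false, iff_true, iff_false,
        mul_zero, mul_one, add_zero, zero_add] <;> linarith [hkey]
  have hg_ae : g =ᵐ[P] P[f|MeasurableSpace.generateFrom {({2} : Set (Fin 3))}] :=
    ae_eq_condExp_of_forall_setIntegral_eq hG hf_int
      (fun s _ _ => Integrable.integrableOn Integrable.of_finite) hg_eq hg_sm
  have hh_ae : h =ᵐ[P] P[f|MeasurableSpace.generateFrom {({0} : Set (Fin 3))}] :=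
    ae_eq_condExp_of_forall_setIntegral_eq hH hf_int
      (fun s _ _ => Integrable.integrableOn Integrable.of_finite) hh_eq hh_sm
  have hA_meas : MeasurableSet A := ((measurableSet_singleton 2).insert 0)
  refine ⟨Fin 3, Fin.instMeasurableSpace 3, P, hPprob, A, hA_meas, MeasurableSpace.generateFrom {({2} : Set (Fin 3))}, MeasurableSpace.generateFrom {({0} : Set (Fin 3))}, hG, hH, ?_, ?_⟩
  · -- measure computation
    have hset_eq : {ω | 1 - δ ≤ |(P[f|MeasurableSpace.generateFrom {({2} : Set (Fin 3))}]) ω - (P[f|MeasurableSpace.generateFrom {({0} : Set (Fin 3))}]) ω|} =ᵐ[P] A := by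
      rw [Filter.eventuallyEq_set]
      filter_upwards [hg_ae, hh_ae] with ω e1 e2
      rw [← e1, ← e2]
      fin_cases ω
      · show 1 - δ ≤ |g 0 - h 0| ↔ (0 : Fin 3) ∈ A
        exact iff_of_true (by rw [hg0, hh0, abs_of_nonpos (by linarith)]; linarith)
          (by simp [hA_def])
      · show 1 - δ ≤ |g 1 - h 1| ↔ (1 : Fin 3) ∈ A
        refine iff_of_false ?_ ?_
        · rw [hg1, hh1, sub_self, abs_zero]; linarith
        · simp only [hA_def, Set.mem_insert_iff, Set.mem_singleton_iff]
          push_neg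
          exact ⟨by decide, by decide⟩
      · show 1 - δ ≤ |g 2 - h 2| ↔ (2 : Fin 3) ∈ A
        exact iff_of_true (by rw [hg2, hh2, abs_of_nonneg (by linarith)])
          (by simp [hA_def])
    show P {ω | 1 - δ ≤ |(P[f|MeasurableSpace.generateFrom {({2} : Set (Fin 3))}]) ω - (P[f|MeasurableSpace.generateFrom {({0} : Set (Fin 3))}]) ω|} = ENNReal.ofReal (2 * δ / (1 + δ))
    rw [measure_congr hset_eq]
    rw [hP_def, measure_three]
    rw [Set.indicator_of_mem (show (0:Fin 3) ∈ A by simp [hA_def]) 1,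
      Set.indicator_of_notMem (show (1:Fin 3) ∉ A by
        simp only [hA_def, Set.mem_insert_iff, Set.mem_singleton_iff]
        push_neg
        exact ⟨by decide, by decide⟩) 1,
      Set.indicator_of_mem (show (2:Fin 3) ∈ A by simp [hA_def]) 1]
    simp only [Pi.one_apply, mul_one, mul_zero, add_zero]
    rw [ha_def, ← ENNReal.ofReal_add har har]
    congr 1
    rw [har_def]; ring
  · -- a.e. identity
    filter_upwards [hg_ae, hh_ae] with ω e1 e2
    show |(P[f|MeasurableSpace.generateFrom {({2} : Set (Fin 3))}]) ω - (P[f|MeasurableSpace.generateFrom {({0} : Set (Fin 3))}]) ω| = (1 - δ) * f ω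
    rw [← e1, ← e2]
    fin_cases ω
    · show |g 0 - h 0| = (1 - δ) * f 0
      rw [hg0, hh0, hf0, abs_of_nonpos (by linarith)]; ring
    · show |g 1 - h 1| = (1 - δ) * f 1
      rw [hg1, hh1, hf1, sub_self, abs_zero]; ring
    · show |g 2 - h 2| = (1 - δ) * f 2
      rw [hg2, hh2, hf2, abs_of_nonneg (by linarith)]; ring
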